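/- Let Λ_P be a Penrose model set and let U ⊂ S¹ be an arbitrary, but fixed, finite set of pairwise non-parallel ℤ[ζ₅]-directions. Then the class 𝓕(Λ_P) of all finite subsets of Λ_P is not determined by the X-rays in the directions of U: there exist distinct finite sets F, F' ⊂ Λ_P with X_uF = X_uF' for all u ∈ U. -/

import Mathlib

open scoped Pointwise

noncomputable section

instance : TopologicalSpace (ZMod 5) := ⊥
instance : DiscreteTopology (ZMod 5) := ⟨rfl⟩

/-- The primitive 5th root of unity ζ₅ = exp(2πi/5). -/
def zeta5 : ℂ := Complex.exp (2 * Real.pi * Complex.I / 5)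

/-- The ring of cyclotomic integers ℤ[ζ₅], as the set of ℤ-combinations of 1, ζ₅, ζ₅², ζ₅³. -/
def Zzeta5 : Set ℂ := {z | ∃ a : Fin 4 → ℤ, z = ∑ j : Fin 4, (a j : ℂ) * zeta5 ^ (j : ℕ)}

/-- The (unique) integer coefficients of an element of ℤ[ζ₅] w.r.t. the basis 1, ζ₅, ζ₅², ζ₅³. -/
def coeffs (z : ℂ) : Fin 4 → ℤ :=
  open Classical in
  if h : z ∈ Zzeta5 then h.choose else 0

/-- The star map z ↦ (σ₂(z), Σ aⱼ(z) mod 5), with σ₂ the Galois automorphism ζ₅ ↦ ζ₅². -/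
def starMap (z : ℂ) : ℂ × ZMod 5 :=
  (∑ j : Fin 4, (coeffs z j : ℂ) * zeta5 ^ (2 * (j : ℕ)),
   ∑ j : Fin 4, ((coeffs z j : ℤ) : ZMod 5))

/-- The regular pentagon P: the convex hull of the 5th roots of unity. -/
def pent : Set ℂ := convexHull ℝ {z : ℂ | z ^ 5 = 1}

/-- The golden ratio τ = (1+√5)/2. -/
def tauR : ℝ := (1 + Real.sqrt 5) / 2

/-- The Penrose window W_P ⊂ ℝ² × ℤ/5ℤ. -/
def WP : Set (ℂ × ZMod 5) :=
  (pent ×ˢ ({1} : Set (ZMod 5))) ∪ ((-pent) ×ˢ ({2} : Set (ZMod 5))) ∪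
    ((tauR • pent) ×ˢ ({3} : Set (ZMod 5))) ∪ ((-(tauR • pent)) ×ˢ ({4} : Set (ZMod 5)))

/-- The shifted window W_P^u = (u, 0) + W_P. -/
def WPu (u : ℂ) : Set (ℂ × ZMod 5) := (fun p => ((u, (0 : ZMod 5)) + p)) '' WP

/-- The model set Λ_P^u = {z ∈ ℤ[ζ₅] : z⋆ ∈ W_P^u}. -/
def LambdaPu (u : ℂ) : Set ℂ := {z | z ∈ Zzeta5 ∧ starMap z ∈ WPu u}

/-- Λ_P^u is generic if the boundary of W_P^u contains no point of ℤ[ζ₅]⋆. -/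
def IsGeneric (u : ℂ) : Prop := ∀ z ∈ Zzeta5, starMap z ∉ frontier (WPu u)

/-- A Penrose model set: a translate t + Λ_P^u of a generic Λ_P^u. -/
def IsPMS (Λ : Set ℂ) : Prop := ∃ t u : ℂ, IsGeneric u ∧ Λ = (fun z => t + z) '' LambdaPu u

/-- v is parallel to u. -/
def Par (u v : ℂ) : Prop := ∃ r : ℝ, r ≠ 0 ∧ v = r • u

/-- A ℤ[ζ₅]-direction: a direction parallel to a nonzero element of ℤ[ζ₅]. -/
def IsZ5Direction (u : ℂ) : Prop := ∃ z ∈ Zzeta5, z ≠ 0 ∧ Par u z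

/-- The line through p in direction u. -/
def line (u p : ℂ) : Set ℂ := {x | ∃ t : ℝ, x = p + t • u}

/-- The X-ray of F in direction u, as a function of the base point of the line. -/
def Xray (u : ℂ) (F : Set ℂ) : ℂ → ℕ := fun p => (F ∩ line u p).ncard

/-- A convex subset C of Λ: a finite subset with C = conv(C) ∩ Λ. -/
def IsConvexSubset (Λ C : Set ℂ) : Prop :=
  C.Finite ∧ C ⊆ Λ ∧ C = convexHull ℝ C ∩ Λ

lemma zeta5_prim : IsPrimitiveRoot zeta5 5 := Complex.isPrimitiveRoot_exp 5 (by norm_num)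
lemma zeta5_pow5 : zeta5 ^ 5 = 1 := zeta5_prim.pow_eq_one
lemma zeta5_pow_mod (m : ℕ) : zeta5 ^ m = zeta5 ^ (m % 5) := by
  conv_lhs => rw [← Nat.div_add_mod m 5, pow_add, pow_mul, zeta5_pow5, one_pow, one_mul]
lemma zeta5_sum : (1 : ℂ) + zeta5 + zeta5^2 + zeta5^3 + zeta5^4 = 0 := by
  have h1 : zeta5 ≠ 1 := zeta5_prim.ne_one (by norm_num)
  have h : ∑ i ∈ Finset.range 5, zeta5 ^ i = 0 := by
    rw [geom_sum_eq h1, zeta5_pow5]; simp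
  simp [Finset.sum_range_succ] at h
  linear_combination h

lemma zeta5_linindep (a b : Fin 4 → ℤ)
    (h : ∑ j : Fin 4, (a j : ℂ) * zeta5 ^ (j : ℕ) = ∑ j : Fin 4, (b j : ℂ) * zeta5 ^ (j : ℕ)) :
    a = b := by
  have hmin : minpoly ℚ zeta5 = Polynomial.cyclotomic 5 ℚ :=
    (Polynomial.cyclotomic_eq_minpoly_rat zeta5_prim (by norm_num)).symm
  have hdeg : (minpoly ℚ zeta5).natDegree = 4 := by
    rw [hmin, Polynomial.natDegree_cyclotomic]; decide
  have hli : LinearIndependent ℚ fun i : Fin 4 => zeta5 ^ (i : ℕ) := by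
    have := linearIndependent_pow (K := ℚ) (S := ℂ) zeta5
    rwa [hdeg] at this
  have h2 := Fintype.linearIndependent_iff.1 hli (fun i => (a i - b i : ℚ)) ?_
  · funext i
    have h3 := h2 i
    have h4 : (a i : ℚ) - b i = 0 := by push_cast at h3 ⊢; exact_mod_cast h3
    have h5 : (a i : ℚ) = b i := by linarith
    exact_mod_cast h5
  · have heq : ∑ i : Fin 4, ((a i - b i : ℚ)) • zeta5 ^ (i : ℕ)
        = ∑ j : Fin 4, (a j : ℂ) * zeta5 ^ (j : ℕ) - ∑ j : Fin 4, (b j : ℂ) * zeta5 ^ (j : ℕ) := by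
      rw [← Finset.sum_sub_distrib]
      refine Finset.sum_congr rfl fun i _ => ?_
      rw [Rat.smul_def]
      push_cast
      ring
    rw [heq, h, sub_self]

lemma coeffs_spec {z : ℂ} (h : z ∈ Zzeta5) :
    z = ∑ j : Fin 4, (coeffs z j : ℂ) * zeta5 ^ (j : ℕ) := by
  rw [coeffs, dif_pos h]
  exact h.choose_spec

lemma coeffs_eq (a : Fin 4 → ℤ) :
    coeffs (∑ j : Fin 4, (a j : ℂ) * zeta5 ^ (j : ℕ)) = a := by
  have hmem : (∑ j : Fin 4, (a j : ℂ) * zeta5 ^ (j : ℕ)) ∈ Zzeta5 := ⟨a, rfl⟩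
  exact zeta5_linindep _ _ (coeffs_spec hmem).symm

/-- `phi m c = ∑ c j * ζ^(m*j)` for a 5-coefficient vector. -/
def phi (m : ℕ) (c : Fin 5 → ℤ) : ℂ := ∑ j : Fin 5, (c j : ℂ) * zeta5 ^ (m * (j : ℕ))
def chi (c : Fin 5 → ℤ) : ZMod 5 := ∑ j : Fin 5, ((c j : ℤ) : ZMod 5)
/-- reduced 4-vector -/
def red (c : Fin 5 → ℤ) : Fin 4 → ℤ := ![c 0 - c 4, c 1 - c 4, c 2 - c 4, c 3 - c 4]

lemma phi1_red (c : Fin 5 → ℤ) :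
    phi 1 c = ∑ j : Fin 4, ((red c j : ℤ) : ℂ) * zeta5 ^ (j : ℕ) := by
  simp only [phi, red, Fin.sum_univ_five, Fin.sum_univ_four]
  norm_num [Matrix.cons_val_zero, Matrix.cons_val_one]
  have e3 : ((3 : Fin 5) : ℕ) = 3 := rfl
  have e4 : ((4 : Fin 5) : ℕ) = 4 := rfl
  have e3' : ((3 : Fin 4) : ℕ) = 3 := rfl
  simp only [Matrix.cons_val]
  push_cast
  linear_combination (((c 4 : ℂ))) * zeta5_sum

lemma phi1_mem (c : Fin 5 → ℤ) : phi 1 c ∈ Zzeta5 := by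
  rw [phi1_red]; exact ⟨red c, rfl⟩

lemma coeffs_phi (c : Fin 5 → ℤ) : coeffs (phi 1 c) = red c := by
  rw [phi1_red, coeffs_eq]

lemma mem_iff_phi (z : ℂ) : z ∈ Zzeta5 ↔ ∃ c : Fin 5 → ℤ, z = phi 1 c := by
  constructor
  · rintro ⟨a, rfl⟩
    refine ⟨![a 0, a 1, a 2, a 3, 0], ?_⟩
    simp only [phi, Fin.sum_univ_five, Fin.sum_univ_four]
    have e3 : ((3 : Fin 5) : ℕ) = 3 := rfl
    have e3' : ((3 : Fin 4) : ℕ) = 3 := rfl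
    norm_num [e3, e3']
    simp [Matrix.cons_val]
  · rintro ⟨c, rfl⟩; exact phi1_mem c

lemma star_phi (c : Fin 5 → ℤ) : starMap (phi 1 c) = (phi 2 c, chi c) := by
  rw [starMap, coeffs_phi]
  have e3 : ((3 : Fin 5) : ℕ) = 3 := rfl
  have e4 : ((4 : Fin 5) : ℕ) = 4 := rfl
  have e3' : ((3 : Fin 4) : ℕ) = 3 := rfl
  simp only [Prod.mk.injEq]
  constructor
  · simp only [phi, red, Fin.sum_univ_five, Fin.sum_univ_four]
    norm_num [e3, e4, e3']
    have h6 : zeta5 ^ 6 = zeta5 := by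
      rw [zeta5_pow_mod 6]; norm_num
    have h8 : zeta5 ^ 8 = zeta5 ^ 3 := by
      rw [zeta5_pow_mod 8]
    rw [h6, h8]
    push_cast
    linear_combination (-(c 4 : ℂ)) * zeta5_sum
  · simp only [chi, red, Fin.sum_univ_five, Fin.sum_univ_four]
    norm_num
    push_cast
    have h5 : (5 : ZMod 5) = 0 := rfl
    ring_nf
    linear_combination (-(c 4 : ZMod 5)) * h5

/-- convolution of coefficient vectors modulo 5 -/
def conv (c d : Fin 5 → ℤ) : Fin 5 → ℤ := fun e =>
  ∑ p ∈ Finset.univ.filter (fun p : Fin 5 × Fin 5 => p.1 + p.2 = e), c p.1 * d p.2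

lemma zeta5_pow_fin (m : ℕ) (j k : Fin 5) :
    zeta5 ^ (m * ((j + k : Fin 5) : ℕ)) = zeta5 ^ (m * (j : ℕ)) * zeta5 ^ (m * (k : ℕ)) := by
  rw [← pow_add, ← Nat.mul_add]
  rw [zeta5_pow_mod (m * ((j + k : Fin 5) : ℕ)), zeta5_pow_mod (m * ((j:ℕ) + (k:ℕ)))]
  congr 1
  have : ((j + k : Fin 5) : ℕ) = ((j:ℕ) + (k:ℕ)) % 5 := by
    simp [Fin.add_def]
  rw [this]
  conv_rhs => rw [Nat.mul_mod]
  rw [Nat.mul_mod, Nat.mod_mod_of_dvd _ (dvd_refl 5)]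


lemma phi_conv (m : ℕ) (c d : Fin 5 → ℤ) : phi m (conv c d) = phi m c * phi m d := by
  unfold phi conv
  rw [Finset.sum_mul_sum]
  have : ∀ e : Fin 5,
      ((∑ p ∈ Finset.univ.filter (fun p : Fin 5 × Fin 5 => p.1 + p.2 = e), c p.1 * d p.2 : ℤ) : ℂ)
        * zeta5 ^ (m * (e : ℕ))
      = ∑ p ∈ Finset.univ.filter (fun p : Fin 5 × Fin 5 => p.1 + p.2 = e),
          ((c p.1 : ℂ) * zeta5 ^ (m * (p.1 : ℕ))) * ((d p.2 : ℂ) * zeta5 ^ (m * (p.2 : ℕ))) := by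
    intro e
    push_cast
    rw [Finset.sum_mul]
    refine Finset.sum_congr rfl fun p hp => ?_
    simp only [Finset.mem_filter] at hp
    rw [← hp.2, zeta5_pow_fin]
    ring
  simp only [this]
  rw [Finset.sum_fiberwise (g := fun p : Fin 5 × Fin 5 => p.1 + p.2)
    (f := fun p => ((c p.1 : ℂ) * zeta5 ^ (m * (p.1 : ℕ))) * ((d p.2 : ℂ) * zeta5 ^ (m * (p.2 : ℕ))))]
  rw [← Finset.sum_product']
  rfl

lemma chi_conv (c d : Fin 5 → ℤ) : chi (conv c d) = chi c * chi d := by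
  unfold chi conv
  rw [Finset.sum_mul_sum]
  have : ∀ e : Fin 5,
      ((∑ p ∈ Finset.univ.filter (fun p : Fin 5 × Fin 5 => p.1 + p.2 = e), c p.1 * d p.2 : ℤ) : ZMod 5)
      = ∑ p ∈ Finset.univ.filter (fun p : Fin 5 × Fin 5 => p.1 + p.2 = e),
          ((c p.1 : ZMod 5) * (d p.2 : ZMod 5)) := by
    intro e; push_cast; rfl
  simp only [this]
  rw [Finset.sum_fiberwise (g := fun p : Fin 5 × Fin 5 => p.1 + p.2)
    (f := fun p => ((c p.1 : ZMod 5) * (d p.2 : ZMod 5)))]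
  rw [← Finset.sum_product']
  rfl

open Real in
/-- t' = 2 cos(2π/5) -/
def tp : ℝ := 2 * Real.cos (2 * Real.pi / 5)
def sp : ℝ := 2 * Real.sin (2 * Real.pi / 5)

lemma zeta5_eq : zeta5 = Complex.cos (2 * Real.pi / 5) + Complex.sin (2 * Real.pi / 5) * Complex.I := by
  have h : (2 * (Real.pi:ℂ) * Complex.I / 5) = ((2 * (Real.pi:ℂ) / 5)) * Complex.I := by ring
  rw [zeta5, h, Complex.exp_mul_I]

lemma zeta5_four : zeta5 ^ 4 = Complex.cos (2 * Real.pi / 5) - Complex.sin (2 * Real.pi / 5) * Complex.I := by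
  have h : zeta5 ^ 4 = zeta5⁻¹ :=
    eq_inv_of_mul_eq_one_left (by linear_combination zeta5_pow5)
  have h2 : (-(2 * (Real.pi:ℂ) * Complex.I / 5)) = ((-(2 * (Real.pi:ℂ) / 5))) * Complex.I := by ring
  rw [h, zeta5, ← Complex.exp_neg, h2, Complex.exp_mul_I, Complex.cos_neg, Complex.sin_neg]
  ring

lemma tp_c : (tp : ℂ) = zeta5 + zeta5 ^ 4 := by
  rw [zeta5_four, zeta5_eq, tp]
  push_cast
  ring

lemma sp_c : (sp : ℂ) * Complex.I = zeta5 - zeta5 ^ 4 := by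
  rw [zeta5_four, zeta5_eq, sp]
  push_cast
  ring

lemma sp_pos : 0 < sp := by
  have := Real.pi_pos
  have h := Real.sin_pos_of_pos_of_lt_pi (x := 2 * Real.pi / 5) (by linarith) (by linarith)
  rw [sp]; linarith

lemma tp_pos : 0 < tp := by
  have := Real.pi_pos
  have h := Real.cos_pos_of_mem_Ioo (x := 2 * Real.pi / 5) ⟨by linarith, by linarith⟩
  rw [tp]; linarith

lemma tp_sq : tp ^ 2 = 1 - tp := by
  have h8 : zeta5 ^ 8 = zeta5 ^ 3 := by rw [zeta5_pow_mod 8]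
  have hC : (tp : ℂ) ^ 2 = 1 - (tp : ℂ) := by
    rw [tp_c]
    linear_combination zeta5_sum + h8 + 2 * zeta5_pow5
  exact_mod_cast hC

lemma tp_lt_one : tp < 1 := by
  nlinarith [tp_pos, tp_sq, sq_nonneg tp]

lemma tp_irrational : Irrational tp := by
  have h5 : Irrational (Real.sqrt 5) := by
    have := (Nat.prime_iff.mp (by norm_num : Nat.Prime 5))
    exact_mod_cast (Nat.Prime.irrational_sqrt (by norm_num : Nat.Prime 5))
  have key : Real.sqrt 5 = 2 * tp + 1 := by
    have h : (2 * tp + 1) ^ 2 = 5 := by nlinarith [tp_sq]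
    have hpos : 0 ≤ 2 * tp + 1 := by nlinarith [tp_pos]
    nlinarith [Real.sq_sqrt (by norm_num : (5:ℝ) ≥ 0), Real.sqrt_nonneg 5,
      sq_nonneg (Real.sqrt 5 - (2 * tp + 1))]
  intro ⟨q, hq⟩
  apply h5
  exact ⟨2 * q + 1, by rw [key, ← hq]; push_cast; ring⟩

lemma dense_L (r : ℝ) (hr : r ≠ 0) : Dense {x : ℝ | ∃ a b : ℤ, x = r * a + r * tp * b} := by
  set L : AddSubgroup ℝ :=
    { carrier := {x : ℝ | ∃ a b : ℤ, x = r * a + r * tp * b}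
      zero_mem' := ⟨0, 0, by push_cast; ring⟩
      add_mem' := by
        rintro x y ⟨a, b, rfl⟩ ⟨a', b', rfl⟩
        exact ⟨a + a', b + b', by push_cast; ring⟩
      neg_mem' := by
        rintro x ⟨a, b, rfl⟩
        exact ⟨-a, -b, by push_cast; ring⟩ } with hL
  have : Dense (L : Set ℝ) := by
    rcases AddSubgroup.dense_or_cyclic L with h | ⟨g, hg⟩
    · exact h
    · exfalso
      have h1 : r ∈ L := ⟨1, 0, by push_cast; ring⟩
      have h2 : r * tp ∈ L := ⟨0, 1, by push_cast; ring⟩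
      rw [hg, AddSubgroup.mem_closure_singleton] at h1 h2
      obtain ⟨n, hn⟩ := h1
      obtain ⟨m, hm⟩ := h2
      have hn0 : n ≠ 0 := by
        rintro rfl
        simp at hn
        exact hr hn.symm
      have hn' : (n : ℝ) * g = r := by rw [← zsmul_eq_mul]; exact hn
      have hm' : (m : ℝ) * g = r * tp := by rw [← zsmul_eq_mul]; exact hm
      have hnR : (n : ℝ) ≠ 0 := by exact_mod_cast hn0
      apply tp_irrational
      refine ⟨(m : ℚ) / n, ?_⟩
      have key : tp = (m : ℝ) / n := by
        have h3 : (n:ℝ) * ((m:ℝ) * g) = (n:ℝ) * (r * tp) := by rw [hm']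
        rw [show (n:ℝ) * ((m:ℝ) * g) = (m:ℝ) * ((n:ℝ) * g) by ring, hn'] at h3
        field_simp
        have := mul_left_cancel₀ hr (show r * ((m:ℝ)) = r * (tp * n) by nlinarith [h3])
        linarith [this]
      rw [key]
      push_cast
      ring
  exact this

lemma dense_approx (r : ℝ) (hr : r ≠ 0) (y : ℝ) {ε : ℝ} (hε : 0 < ε) :
    ∃ a b : ℤ, |r * a + r * tp * b - y| < ε := by
  have hd := dense_L r hr
  rcases Metric.dense_iff.1 hd y ε hε with ⟨x, hx1, a, b, rfl⟩
  exact ⟨a, b, by simpa [Real.dist_eq, abs_sub_comm] using hx1⟩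


lemma complex_approx (x0 : ℂ) {ε : ℝ} (hε : 0 < ε) :
    ∃ a b c d : ℤ,
      ‖((((1 + 5*a + 5*tp*b) : ℝ) : ℂ) + (((5*c + 5*tp*d)*sp : ℝ)) * Complex.I - x0)‖ < ε := by
  obtain ⟨a, b, hab⟩ := dense_approx 5 (by norm_num) (x0.re - 1) (half_pos hε)
  have hsp := sp_pos
  obtain ⟨c, d, hcd⟩ := dense_approx 5 (by norm_num) (x0.im / sp) (div_pos (half_pos hε) hsp)
  refine ⟨a, b, c, d, ?_⟩
  set z := (((1 + 5*a + 5*tp*b) : ℝ) : ℂ) + (((5*c + 5*tp*d)*sp : ℝ)) * Complex.I with hz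
  have hre : (z - x0).re = (5*a + 5*tp*b) - (x0.re - 1) := by
    simp [hz, Complex.add_re, Complex.sub_re, Complex.ofReal_re, Complex.mul_re,
      Complex.I_re, Complex.I_im, Complex.ofReal_im]
    ring
  have him : (z - x0).im = (5*c + 5*tp*d) * sp - x0.im := by
    simp [hz, Complex.add_im, Complex.sub_im, Complex.ofReal_re, Complex.mul_im,
      Complex.I_re, Complex.I_im, Complex.ofReal_im]
  have h1 : |(z - x0).re| < ε / 2 := by
    rw [hre]
    have : (5:ℝ)*a + 5*tp*b = 5 * a + 5 * tp * b := by ring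
    simpa using hab
  have h2 : |(z - x0).im| < ε / 2 := by
    rw [him]
    have key : |(5*(c:ℝ) + 5*tp*d) - x0.im / sp| < ε / 2 / sp := by simpa using hcd
    have : |(5*(c:ℝ) + 5*tp*d) * sp - x0.im| = |(5*(c:ℝ) + 5*tp*d) - x0.im / sp| * sp := by
      rw [← abs_of_pos hsp, ← abs_mul]
      congr 1
      rw [abs_of_pos hsp]
      field_simp
    rw [this]
    calc |(5*(c:ℝ) + 5*tp*d) - x0.im / sp| * sp < (ε / 2 / sp) * sp := by
          exact mul_lt_mul_of_pos_right key hsp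
      _ = ε / 2 := by field_simp
  calc ‖z - x0‖ ≤ |(z - x0).re| + |(z - x0).im| := Complex.norm_le_abs_re_add_abs_im _
    _ < ε := by linarith

lemma tpsp_c : (tp : ℂ) * ((sp : ℂ) * Complex.I) = zeta5 ^ 2 - zeta5 ^ 3 := by
  have h8 : zeta5 ^ 8 = zeta5 ^ 3 := by rw [zeta5_pow_mod 8]
  rw [tp_c, sp_c]
  linear_combination -h8

lemma star_target (a b c d : ℤ) :
    phi 2 ![1+5*a, 5*d, 5*(b-c), 5*(b+c), -(5*d)]
      = (((1 + 5*a + 5*tp*b) : ℝ) : ℂ) + (((5*c + 5*tp*d)*sp : ℝ)) * Complex.I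
    ∧ chi ![1+5*a, 5*d, 5*(b-c), 5*(b+c), -(5*d)] = 1 := by
  constructor
  · have h6 : zeta5 ^ 6 = zeta5 := by rw [zeta5_pow_mod 6]; norm_num
    have h8 : zeta5 ^ 8 = zeta5 ^ 3 := by rw [zeta5_pow_mod 8]
    have e3 : ((3 : Fin 5) : ℕ) = 3 := rfl
    have e4 : ((4 : Fin 5) : ℕ) = 4 := rfl
    simp only [phi, Fin.sum_univ_five]
    norm_num [e3, e4]
    rw [h6, h8]
    push_cast
    linear_combination (-5*(b:ℂ)) * tp_c + (-5*(c:ℂ)) * sp_c + (-5*(d:ℂ)) * tpsp_c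
  · have h5 : (5 : ZMod 5) = 0 := rfl
    simp only [chi, Fin.sum_univ_five]
    norm_num
    push_cast
    linear_combination (a + 2*b : ZMod 5) * h5


def ct : Fin 5 → ℤ := ![0, 0, 1, 1, 0]

lemma phi1_ct : phi 1 ct = ((-(1+tp) : ℝ) : ℂ) := by
  have e3 : ((3 : Fin 5) : ℕ) = 3 := rfl
  simp only [phi, ct, Fin.sum_univ_five]
  norm_num [e3]
  push_cast
  linear_combination tp_c + zeta5_sum

lemma phi2_ct : phi 2 ct = ((tp : ℝ) : ℂ) := by
  have h6 : zeta5 ^ 6 = zeta5 := by rw [zeta5_pow_mod 6]; norm_num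
  have e3 : ((3 : Fin 5) : ℕ) = 3 := rfl
  simp only [phi, ct, Fin.sum_univ_five]
  norm_num [e3]
  simp only [Matrix.cons_val]
  push_cast
  rw [h6]
  linear_combination -tp_c

lemma phi_smul5 (m : ℕ) (c : Fin 5 → ℤ) : phi m (fun j => 5 * c j) = 5 * phi m c := by
  simp only [phi, Finset.mul_sum]
  refine Finset.sum_congr rfl fun j _ => ?_
  push_cast
  ring

lemma chi_smul5 (c : Fin 5 → ℤ) : chi (fun j => 5 * c j) = 0 := by
  simp only [chi]
  have h5 : ((5 : ℤ) : ZMod 5) = 0 := rfl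
  calc ∑ j : Fin 5, ((5 * c j : ℤ) : ZMod 5) = ∑ j : Fin 5, ((5:ℤ) : ZMod 5) * ((c j : ℤ) : ZMod 5) := by
        refine Finset.sum_congr rfl fun j _ => ?_; push_cast; ring
    _ = 0 := by rw [h5]; simp

lemma w_exists (c : Fin 5 → ℤ) (k : ℕ) : ∃ e : Fin 5 → ℤ,
    phi 1 e = ((5 * (-(1+tp))^k : ℝ) : ℂ) * phi 1 c ∧
    phi 2 e = ((5 * tp^k : ℝ) : ℂ) * phi 2 c ∧ chi e = 0 := by
  induction k with
  | zero =>
    refine ⟨fun j => 5 * c j, ?_, ?_, chi_smul5 c⟩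
    · rw [phi_smul5]; push_cast; ring
    · rw [phi_smul5]; push_cast; ring
  | succ k ih =>
    obtain ⟨e, h1, h2, h3⟩ := ih
    refine ⟨conv ct e, ?_, ?_, ?_⟩
    · rw [phi_conv, phi1_ct, h1]; push_cast; ring
    · rw [phi_conv, phi2_ct, h2]; push_cast; ring
    · rw [chi_conv, h3]; ring

lemma zeta5_im : zeta5.im = sp / 2 := by
  have h : zeta5 = (((tp : ℂ)) + (sp : ℂ) * Complex.I) / 2 := by
    linear_combination -(tp_c + sp_c) / 2
  rw [h]
  simp [Complex.div_im, Complex.add_im, Complex.mul_im]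

lemma zeta5_quad : zeta5 ^ 2 = (tp : ℂ) * zeta5 - 1 := by
  rw [tp_c]
  linear_combination -zeta5_pow5

lemma pent_interior_nonempty : (interior pent).Nonempty := by
  rw [pent, interior_convexHull_nonempty_iff_affineSpan_eq_top]
  have h1 : (1 : ℂ) ∈ {z : ℂ | z ^ 5 = 1} := by simp
  have hz : zeta5 ∈ {z : ℂ | z ^ 5 = 1} := zeta5_pow5
  have hz2 : zeta5 ^ 2 ∈ {z : ℂ | z ^ 5 = 1} := by
    simp only [Set.mem_setOf_eq, ← pow_mul]
    calc zeta5 ^ (2 * 5) = (zeta5 ^ 5) ^ 2 := by ring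
      _ = 1 := by rw [zeta5_pow5]; norm_num
  rw [AffineSubspace.affineSpan_eq_top_iff_vectorSpan_eq_top_of_nonempty ℝ ℂ ℂ ⟨1, h1⟩]
  have hmem1 : zeta5 - 1 ∈ vectorSpan ℝ {z : ℂ | z ^ 5 = 1} := by
    have := vsub_mem_vectorSpan ℝ hz h1
    simpa using this
  have hmem2 : zeta5 ^ 2 - 1 ∈ vectorSpan ℝ {z : ℂ | z ^ 5 = 1} := by
    have := vsub_mem_vectorSpan ℝ hz2 h1
    simpa using this
  have hli : LinearIndependent ℝ ![zeta5 - 1, zeta5 ^ 2 - 1] := by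
    rw [LinearIndependent.pair_iff]
    intro s t hst
    have hst' : (s:ℂ) * (zeta5 - 1) + (t:ℂ) * ((tp:ℂ) * zeta5 - 2) = 0 := by
      rw [zeta5_quad] at hst
      rw [Complex.real_smul, Complex.real_smul] at hst
      linear_combination hst
    have key : ((s + t*tp : ℝ):ℂ) * zeta5 = ((s + 2*t : ℝ):ℂ) := by
      push_cast
      linear_combination hst'
    have him : zeta5.im ≠ 0 := by
      rw [zeta5_im]
      exact ne_of_gt (div_pos sp_pos two_pos)
    have him2 : (s + t*tp) * zeta5.im = 0 := by
      have h := congrArg Complex.im key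
      simpa [Complex.mul_im] using h
    have hcoef : s + t * tp = 0 := by
      rcases mul_eq_zero.1 him2 with h | h
      · exact h
      · exact absurd h him
    have hcoef2 : s + 2 * t = 0 := by
      have h0 : ((s + 2*t : ℝ):ℂ) = 0 := by
        rw [← key, hcoef]
        simp
      exact_mod_cast h0
    have h3 : t * (2 - tp) = 0 := by linear_combination hcoef2 - hcoef
    have ht : t = 0 := by
      rcases mul_eq_zero.1 h3 with h | h
      · exact h
      · nlinarith [tp_lt_one]
    constructor <;> [skip; exact ht]
    linarith [hcoef2, ht]
  have hspan : Submodule.span ℝ (Set.range ![zeta5 - 1, zeta5 ^ 2 - 1]) = ⊤ := by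
    have hcard : Fintype.card (Fin 2) = Module.finrank ℝ ℂ := by
      rw [Complex.finrank_real_complex]; rfl
    exact hli.span_eq_top_of_card_eq_finrank hcard
  rw [eq_top_iff, ← hspan]
  rw [Submodule.span_le]
  rintro x ⟨i, rfl⟩
  fin_cases i
  · exact hmem1
  · exact hmem2

lemma choose_w (U : Finset ℂ) (cv : ℂ → Fin 5 → ℤ)
    (hcv : ∀ v ∈ U, phi 1 (cv v) ≠ 0 ∧ ∃ r : ℝ, r ≠ 0 ∧ phi 1 (cv v) = (r : ℂ) * v)
    {ε : ℝ} (hε : 0 < ε) :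
    ∃ w : ℂ → Fin 5 → ℤ,
      (∀ v ∈ U, chi (w v) = 0) ∧
      (∀ v ∈ U, ∃ ρ : ℝ, ρ ≠ 0 ∧ phi 1 (w v) = (ρ : ℂ) * v) ∧
      (∑ v ∈ U, ‖phi 2 (w v)‖) < ε ∧
      (∀ S T : Finset ℂ, S ⊆ U → T ⊆ U →
        ∑ v ∈ S, phi 1 (w v) = ∑ v ∈ T, phi 1 (w v) → S = T) := by
  classical
  induction U using Finset.induction_on generalizing ε with
  | empty =>
    refine ⟨fun _ => 0, by simp, by simp, by simpa using hε, ?_⟩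
    intro S T hS hT _
    rw [Finset.subset_empty.1 hS, Finset.subset_empty.1 hT]
  | insert _ _ ha _ =>
    rename_i a s ih
    obtain ⟨w, hw0, hwdir, hwsum, hwinj⟩ :=
      ih (fun v hv => hcv v (Finset.mem_insert_of_mem hv)) (half_pos hε)
    obtain ⟨hane, r, hr0, hrv⟩ := hcv a (Finset.mem_insert_self a s)
    set A := ‖phi 1 (cv a)‖ with hA
    have hApos : 0 < A := by simpa [hA] using norm_pos_iff.2 hane
    set M := ‖phi 2 (cv a)‖ with hM
    have hMnn : 0 ≤ M := norm_nonneg _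
    set N := ∑ v ∈ s, ‖phi 1 (w v)‖ with hN
    have hNnn : 0 ≤ N := Finset.sum_nonneg fun v _ => norm_nonneg _
    -- choose k
    have htp1 : (1:ℝ) < 1 + tp := by linarith [tp_pos]
    obtain ⟨k1, hk1⟩ := exists_pow_lt_of_lt_one
      (show (0:ℝ) < (ε/2) / (5 * (M+1)) by positivity) tp_lt_one
    obtain ⟨k2, hk2⟩ := pow_unbounded_of_one_lt ((2*N+1) / (5*A)) htp1
    set k := max k1 k2 with hk
    have hbound1 : 5 * tp^k * M < ε/2 := by
      have h1 : tp^k ≤ tp^k1 :=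
        pow_le_pow_of_le_one tp_pos.le tp_lt_one.le (le_max_left _ _)
      have h2 : tp^k * M ≤ tp^k1 * (M+1) := by
        have := tp_pos
        have hpk : 0 < tp ^ k1 := pow_pos tp_pos k1
        nlinarith [pow_pos tp_pos k]
      have h3 : tp^k1 * (M+1) < ((ε/2) / (5*(M+1))) * (M+1) := by
        have : (0:ℝ) < M + 1 := by linarith
        exact mul_lt_mul_of_pos_right hk1 this
      have h4 : ((ε/2) / (5*(M+1))) * (M+1) = ε/2/5 := by
        field_simp
      nlinarith
    have hbound2 : 2*N < 5 * (1+tp)^k * A := by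
      have h1 : (1+tp)^k2 ≤ (1+tp)^k := pow_le_pow_right₀ (by linarith) (le_max_right _ _)
      have h2 : (2*N+1) / (5*A) < (1+tp)^k := lt_of_lt_of_le hk2 h1
      have h3 : 2*N+1 < (1+tp)^k * (5*A) := by
        rw [div_lt_iff₀ (by positivity)] at h2
        exact h2
      nlinarith
    obtain ⟨e, he1, he2, he3⟩ := w_exists (cv a) k
    have hnorm1 : ‖phi 1 e‖ = 5 * (1+tp)^k * A := by
      rw [he1, norm_mul, Complex.norm_real, Real.norm_eq_abs, hA]
      congr 1
      rw [abs_mul, abs_pow, abs_neg, abs_of_pos (by linarith [tp_pos] : (0:ℝ) < 1+tp)]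
      norm_num
    have hnorm2 : ‖phi 2 e‖ = 5 * tp^k * M := by
      rw [he2, norm_mul, Complex.norm_real, Real.norm_eq_abs, hM]
      congr 1
      rw [abs_mul, abs_pow, abs_of_pos tp_pos]
      norm_num
    set w' := Function.update w a e with hw'
    have hws : ∀ v ∈ s, w' v = w v := by
      intro v hv
      have hne : v ≠ a := by rintro rfl; exact ha hv
      exact Function.update_of_ne hne _ _
    have hwa : w' a = e := Function.update_self _ _ _
    have hsum_s : ∀ S : Finset ℂ, S ⊆ s →
        ∑ v ∈ S, phi 1 (w' v) = ∑ v ∈ S, phi 1 (w v) := by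
      intro S hS
      exact Finset.sum_congr rfl fun v hv => by rw [hws v (hS hv)]
    have hNbound : ∀ S : Finset ℂ, S ⊆ s → ‖∑ v ∈ S, phi 1 (w v)‖ ≤ N := by
      intro S hS
      calc ‖∑ v ∈ S, phi 1 (w v)‖ ≤ ∑ v ∈ S, ‖phi 1 (w v)‖ := norm_sum_le _ _
        _ ≤ N := Finset.sum_le_sum_of_subset_of_nonneg hS fun v _ _ => norm_nonneg _
    refine ⟨w', ?_, ?_, ?_, ?_⟩
    · intro v hv
      rcases Finset.mem_insert.1 hv with rfl | hv
      · rw [hwa]; exact he3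
      · rw [hws v hv]; exact hw0 v hv
    · intro v hv
      rcases Finset.mem_insert.1 hv with rfl | hv
      · refine ⟨5 * (-(1+tp))^k * r, ?_, ?_⟩
        · have : (-(1+tp) : ℝ) ≠ 0 := by linarith [tp_pos]
          positivity
        · rw [hwa, he1, hrv]
          push_cast
          ring
      · rw [hws v hv]; exact hwdir v hv
    · rw [Finset.sum_insert ha, hwa]
      have : ∑ v ∈ s, ‖phi 2 (w' v)‖ = ∑ v ∈ s, ‖phi 2 (w v)‖ :=
        Finset.sum_congr rfl fun v hv => by rw [hws v hv]
      rw [this, hnorm2]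
      linarith
    · intro S T hS hT hsum
      by_cases haS : a ∈ S <;> by_cases haT : a ∈ T
      · have hS' : S.erase a ⊆ s := Finset.subset_insert_iff.1 hS
        have hT' : T.erase a ⊆ s := Finset.subset_insert_iff.1 hT
        have h1 : phi 1 e + ∑ v ∈ S.erase a, phi 1 (w' v) = ∑ v ∈ S, phi 1 (w' v) := by
          rw [← hwa]; exact Finset.add_sum_erase _ (fun v => phi 1 (w' v)) haS
        have h2 : phi 1 e + ∑ v ∈ T.erase a, phi 1 (w' v) = ∑ v ∈ T, phi 1 (w' v) := by
          rw [← hwa]; exact Finset.add_sum_erase _ (fun v => phi 1 (w' v)) haT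
        have h3 : ∑ v ∈ S.erase a, phi 1 (w v) = ∑ v ∈ T.erase a, phi 1 (w v) := by
          rw [← hsum_s _ hS', ← hsum_s _ hT']
          have := hsum
          rw [← h1, ← h2] at this
          exact add_left_cancel this
        have h4 := hwinj _ _ hS' hT' h3
        rw [← Finset.insert_erase haS, ← Finset.insert_erase haT, h4]
      · exfalso
        have hT' : T ⊆ s := (Finset.subset_insert_iff_of_notMem haT).1 hT
        have hS' : S.erase a ⊆ s := Finset.subset_insert_iff.1 hS
        have h1 : phi 1 e + ∑ v ∈ S.erase a, phi 1 (w' v) = ∑ v ∈ S, phi 1 (w' v) := by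
          rw [← hwa]; exact Finset.add_sum_erase _ (fun v => phi 1 (w' v)) haS
        have heq : phi 1 e = ∑ v ∈ T, phi 1 (w v) - ∑ v ∈ S.erase a, phi 1 (w v) := by
          rw [← hsum_s _ hT', ← hsum_s _ hS']
          rw [← hsum, ← h1]
          ring
        have : ‖phi 1 e‖ ≤ N + N := by
          rw [heq]
          calc ‖_ - _‖ ≤ ‖∑ v ∈ T, phi 1 (w v)‖ + ‖∑ v ∈ S.erase a, phi 1 (w v)‖ :=
                norm_sub_le _ _
            _ ≤ N + N := add_le_add (hNbound _ hT') (hNbound _ hS')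
        rw [hnorm1] at this
        linarith
      · exfalso
        have hS' : S ⊆ s := (Finset.subset_insert_iff_of_notMem haS).1 hS
        have hT' : T.erase a ⊆ s := Finset.subset_insert_iff.1 hT
        have h1 : phi 1 e + ∑ v ∈ T.erase a, phi 1 (w' v) = ∑ v ∈ T, phi 1 (w' v) := by
          rw [← hwa]; exact Finset.add_sum_erase _ (fun v => phi 1 (w' v)) haT
        have heq : phi 1 e = ∑ v ∈ S, phi 1 (w v) - ∑ v ∈ T.erase a, phi 1 (w v) := by
          rw [← hsum_s _ hS', ← hsum_s _ hT']
          rw [hsum, ← h1]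
          ring
        have : ‖phi 1 e‖ ≤ N + N := by
          rw [heq]
          calc ‖_ - _‖ ≤ ‖∑ v ∈ S, phi 1 (w v)‖ + ‖∑ v ∈ T.erase a, phi 1 (w v)‖ :=
                norm_sub_le _ _
            _ ≤ N + N := add_le_add (hNbound _ hS') (hNbound _ hT')
        rw [hnorm1] at this
        linarith
      · have hS' : S ⊆ s := (Finset.subset_insert_iff_of_notMem haS).1 hS
        have hT' : T ⊆ s := (Finset.subset_insert_iff_of_notMem haT).1 hT
        refine hwinj _ _ hS' hT' ?_
        rw [← hsum_s _ hS', ← hsum_s _ hT']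
        exact hsum

lemma phi_add (m : ℕ) (c d : Fin 5 → ℤ) : phi m (fun j => c j + d j) = phi m c + phi m d := by
  simp only [phi, ← Finset.sum_add_distrib]
  refine Finset.sum_congr rfl fun j _ => ?_
  push_cast
  ring

lemma chi_add (c d : Fin 5 → ℤ) : chi (fun j => c j + d j) = chi c + chi d := by
  simp only [chi, ← Finset.sum_add_distrib]
  refine Finset.sum_congr rfl fun j _ => ?_
  push_cast
  ring

lemma phi_fsum (m : ℕ) (S : Finset ℂ) (f : ℂ → Fin 5 → ℤ) :
    phi m (fun j => ∑ v ∈ S, f v j) = ∑ v ∈ S, phi m (f v) := by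
  simp only [phi]
  rw [Finset.sum_comm]
  refine Finset.sum_congr rfl fun j _ => ?_
  push_cast
  rw [Finset.sum_mul]

lemma chi_fsum (S : Finset ℂ) (f : ℂ → Fin 5 → ℤ) :
    chi (fun j => ∑ v ∈ S, f v j) = ∑ v ∈ S, chi (f v) := by
  simp only [chi]
  rw [Finset.sum_comm]
  refine Finset.sum_congr rfl fun j _ => ?_
  push_cast
  rfl

lemma mem_WPu (u y : ℂ) (hy : y ∈ pent) : (u + y, (1 : ZMod 5)) ∈ WPu u := by
  refine ⟨(y, 1), ?_, by simp⟩
  exact Or.inl (Or.inl (Or.inl ⟨hy, rfl⟩))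

lemma exists_z0 (u : ℂ) (hgen : IsGeneric u) :
    ∃ c0 : Fin 5 → ℤ, starMap (phi 1 c0) ∈ interior (WPu u) := by
  obtain ⟨x, hx⟩ := pent_interior_nonempty
  obtain ⟨ε, hε, hball⟩ := Metric.isOpen_iff.1 isOpen_interior x hx
  obtain ⟨a, b, c, d, habs⟩ := complex_approx (u + x) hε
  set e : Fin 5 → ℤ := ![1+5*a, 5*d, 5*(b-c), 5*(b+c), -(5*d)] with he
  obtain ⟨h2, h1⟩ := star_target a b c d
  set pt := (((1 + 5*a + 5*tp*b) : ℝ) : ℂ) + (((5*c + 5*tp*d)*sp : ℝ)) * Complex.I with hpt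
  have hmem : pt - u ∈ interior pent := by
    apply hball
    rw [Metric.mem_ball, Complex.dist_eq]
    have : pt - u - x = pt - (u + x) := by ring
    rw [this]
    exact habs
  have hWPu : starMap (phi 1 e) ∈ WPu u := by
    rw [star_phi, h2, h1]
    have : pt = u + (pt - u) := by ring
    rw [this]
    exact mem_WPu u (pt - u) (interior_subset hmem)
  refine ⟨e, ?_⟩
  have hnf := hgen (phi 1 e) (phi1_mem e)
  by_contra hni
  exact hnf ⟨subset_closure hWPu, hni⟩

lemma slice_ball {W : Set (ℂ × ZMod 5)} {x0 : ℂ} {j : ZMod 5}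
    (h : (x0, j) ∈ interior W) :
    ∃ ε > 0, ∀ y : ℂ, ‖y - x0‖ < ε → (y, j) ∈ interior W := by
  have hcont : Continuous (fun y : ℂ => (y, j)) := continuous_id.prodMk continuous_const
  have hopen : IsOpen ((fun y : ℂ => (y, j)) ⁻¹' interior W) := isOpen_interior.preimage hcont
  obtain ⟨ε, hε, hball⟩ := Metric.isOpen_iff.1 hopen x0 h
  refine ⟨ε, hε, fun y hy => hball ?_⟩
  rw [Metric.mem_ball, Complex.dist_eq]
  exact hy

theorem not_determined_by_finitely_many_Z5_xrays (Λ : Set ℂ) (hΛ : IsPMS Λ) (U : Finset ℂ)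
    (hUdir : ∀ u ∈ U, ‖u‖ = 1 ∧ IsZ5Direction u)
    (hUpar : (U : Set ℂ).Pairwise fun u v => ¬ Par u v) :
    ∃ F F' : Set ℂ, F ⊆ Λ ∧ F.Finite ∧ F' ⊆ Λ ∧ F'.Finite ∧ F ≠ F' ∧
      ∀ u ∈ U, Xray u F = Xray u F' := by
  classical
  obtain ⟨t, u, hgen, hΛeq⟩ := hΛ
  obtain ⟨c0, hc0⟩ := exists_z0 u hgen
  have hc0' : (phi 2 c0, chi c0) ∈ interior (WPu u) := by rw [← star_phi]; exact hc0
  obtain ⟨ε, hεpos, hball⟩ := slice_ball hc0'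
  -- choose lattice vectors parallel to the directions
  have hcv : ∀ v ∈ U, ∃ c : Fin 5 → ℤ, phi 1 c ≠ 0 ∧ ∃ r : ℝ, r ≠ 0 ∧ phi 1 c = (r : ℂ) * v := by
    intro v hv
    obtain ⟨-, z, hzmem, hz0, r, hr0, hzr⟩ := hUdir v hv
    obtain ⟨c, rfl⟩ := (mem_iff_phi z).1 hzmem
    refine ⟨c, hz0, r, hr0, ?_⟩
    rw [hzr, Complex.real_smul]
  choose! cv hcv1 hcv2 using hcv
  obtain ⟨w, hw0, hwdir, hwsum, hwinj⟩ :=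
    choose_w U cv (fun v hv => ⟨hcv1 v hv, hcv2 v hv⟩) hεpos
  -- the point configuration
  set P : Finset ℂ → ℂ := fun S => t + (phi 1 c0 + ∑ v ∈ S, phi 1 (w v)) with hPdef
  -- each point lies in Λ
  have hmemΛ : ∀ S : Finset ℂ, S ⊆ U → P S ∈ Λ := by
    intro S hS
    set ctot : Fin 5 → ℤ := fun j => c0 j + ∑ v ∈ S, w v j with hctot
    have hphi : phi 1 ctot = phi 1 c0 + ∑ v ∈ S, phi 1 (w v) := by
      rw [hctot, phi_add, phi_fsum]
    have hphi2 : phi 2 ctot = phi 2 c0 + ∑ v ∈ S, phi 2 (w v) := by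
      rw [hctot, phi_add, phi_fsum]
    have hchi : chi ctot = chi c0 := by
      rw [hctot, chi_add, chi_fsum]
      have : ∑ v ∈ S, chi (w v) = 0 :=
        Finset.sum_eq_zero fun v hv => hw0 v (hS hv)
      rw [this, add_zero]
    have hclose : ‖phi 2 ctot - phi 2 c0‖ < ε := by
      rw [hphi2]
      have h1 : ‖∑ v ∈ S, phi 2 (w v)‖ ≤ ∑ v ∈ S, ‖phi 2 (w v)‖ := norm_sum_le _ _
      have h2 : ∑ v ∈ S, ‖phi 2 (w v)‖ ≤ ∑ v ∈ U, ‖phi 2 (w v)‖ :=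
        Finset.sum_le_sum_of_subset_of_nonneg hS fun v _ _ => norm_nonneg _
      have h3 : ‖phi 2 c0 + ∑ v ∈ S, phi 2 (w v) - phi 2 c0‖ = ‖∑ v ∈ S, phi 2 (w v)‖ := by
        congr 1; ring
      rw [h3]
      linarith
    have hLam : phi 1 ctot ∈ LambdaPu u := by
      refine ⟨phi1_mem ctot, ?_⟩
      rw [star_phi, hchi]
      exact interior_subset (hball _ hclose)
    rw [hΛeq]
    exact ⟨phi 1 ctot, hLam, by rw [hphi]⟩
  -- injectivity of the configuration map
  have hPinj : ∀ S T : Finset ℂ, S ⊆ U → T ⊆ U → P S = P T → S = T := by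
    intro S T hS hT h
    apply hwinj S T hS hT
    have h' := h
    simp only [hPdef] at h'
    have := add_left_cancel h'
    exact add_left_cancel this
  set Ev := U.powerset.filter (fun S => Even S.card) with hEv
  set Od := U.powerset.filter (fun S => ¬ Even S.card) with hOd
  have hEvU : ∀ S ∈ Ev, S ⊆ U := fun S hS =>
    Finset.mem_powerset.1 (Finset.mem_filter.1 hS).1
  have hOdU : ∀ S ∈ Od, S ⊆ U := fun S hS =>
    Finset.mem_powerset.1 (Finset.mem_filter.1 hS).1
  refine ⟨↑(Ev.image P), ↑(Od.image P), ?_, (Ev.image P).finite_toSet, ?_,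
    (Od.image P).finite_toSet, ?_, ?_⟩
  · intro x hx
    obtain ⟨S, hS, rfl⟩ := Finset.mem_image.1 hx
    exact hmemΛ S (hEvU S hS)
  · intro x hx
    obtain ⟨S, hS, rfl⟩ := Finset.mem_image.1 hx
    exact hmemΛ S (hOdU S hS)
  · -- F ≠ F'
    intro hFF
    have hPe : P ∅ ∈ (Ev.image P : Set ℂ) := by
      refine Finset.mem_coe.2 (Finset.mem_image.2 ⟨∅, ?_, rfl⟩)
      simp [hEv]
    rw [hFF] at hPe
    obtain ⟨S, hS, hPS⟩ := Finset.mem_image.1 (Finset.mem_coe.1 hPe)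
    have : S = ∅ := hPinj S ∅ (hOdU S hS) (Finset.empty_subset U) hPS
    rw [this] at hS
    have := (Finset.mem_filter.1 hS).2
    simp at this
  · -- equal X-rays
    intro v hv
    funext p
    -- invariance of lines under translation by real multiples of v
    have hline : ∀ (x : ℂ) (ρ : ℝ), x ∈ line v p → x + (ρ : ℂ) * v ∈ line v p := by
      rintro x ρ ⟨s, rfl⟩
      exact ⟨s + ρ, by push_cast [Complex.real_smul]; ring⟩
    obtain ⟨ρv, hρv0, hρv⟩ := hwdir v hv
    -- P of symmetric difference
    have hPsd : ∀ S : Finset ℂ, S ⊆ U →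
        (P S ∈ line v p ↔ P (symmDiff S {v}) ∈ line v p) := by
      intro S hS
      by_cases hvS : v ∈ S
      · have hsd : symmDiff S {v} = S.erase v := by
          ext x
          simp only [Finset.mem_symmDiff, Finset.mem_singleton, Finset.mem_erase]
          constructor
          · rintro (⟨h1, h2⟩ | ⟨rfl, h2⟩)
            · exact ⟨h2, h1⟩
            · exact absurd hvS h2
          · rintro ⟨h1, h2⟩
            exact Or.inl ⟨h2, h1⟩
        have hsum : P S = P (symmDiff S {v}) + (ρv : ℂ) * v := by
          rw [hsd, hPdef]
          simp only []
          rw [← Finset.add_sum_erase _ (fun x => phi 1 (w x)) hvS, hρv]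
          ring
        constructor
        · intro h
          have h2 := hline _ (-ρv) h
          rw [hsum] at h2
          have e : P (symmDiff S {v})
              = P S + ((-ρv : ℝ) : ℂ) * v := by
            rw [hsum]; push_cast; ring
          rw [e]
          exact hline _ (-ρv) h
        · intro h
          have := hline _ ρv h
          rw [hsum]
          exact this
      · have hsd : symmDiff S {v} = insert v S := by
          ext x
          simp only [Finset.mem_symmDiff, Finset.mem_singleton, Finset.mem_insert]
          constructor
          · rintro (⟨h1, h2⟩ | ⟨rfl, h2⟩)
            · exact Or.inr h1
            · exact Or.inl rfl
          · rintro (rfl | h1)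
            · exact Or.inr ⟨rfl, hvS⟩
            · exact Or.inl ⟨h1, fun h => hvS (h ▸ h1)⟩
        have hsum : P (symmDiff S {v}) = P S + (ρv : ℂ) * v := by
          rw [hsd, hPdef]
          simp only []
          rw [Finset.sum_insert hvS, hρv]
          ring
        constructor
        · intro h
          rw [hsum]
          exact hline _ ρv h
        · intro h
          have e : P S = P (symmDiff S {v}) + ((-ρv : ℝ) : ℂ) * v := by
            rw [hsum]; push_cast; ring
          rw [e]
          exact hline _ (-ρv) h
    have hsdU : ∀ S : Finset ℂ, S ⊆ U → symmDiff S {v} ⊆ U := by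
      intro S hS x hx
      rcases Finset.mem_symmDiff.1 hx with ⟨h1, -⟩ | ⟨h1, -⟩
      · exact hS h1
      · exact Finset.mem_singleton.1 h1 ▸ hv
    have hsdcard : ∀ S : Finset ℂ, (Even (symmDiff S {v}).card ↔ ¬ Even S.card) := by
      intro S
      by_cases hvS : v ∈ S
      · have hsd : symmDiff S {v} = S.erase v := by
          ext x
          simp only [Finset.mem_symmDiff, Finset.mem_singleton, Finset.mem_erase]
          constructor
          · rintro (⟨h1, h2⟩ | ⟨rfl, h2⟩)
            · exact ⟨h2, h1⟩
            · exact absurd hvS h2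
          · rintro ⟨h1, h2⟩
            exact Or.inl ⟨h2, h1⟩
        rw [hsd]
        have hins : S = insert v (S.erase v) := (Finset.insert_erase hvS).symm
        have hcard : S.card = (S.erase v).card + 1 := by
          conv_lhs => rw [hins]
          rw [Finset.card_insert_of_notMem (Finset.notMem_erase v S)]
        rw [hcard, Nat.even_add_one, not_not]
      · have hsd : symmDiff S {v} = insert v S := by
          ext x
          simp only [Finset.mem_symmDiff, Finset.mem_singleton, Finset.mem_insert]
          constructor
          · rintro (⟨h1, h2⟩ | ⟨rfl, h2⟩)
            · exact Or.inr h1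
            · exact Or.inl rfl
          · rintro (rfl | h1)
            · exact Or.inr ⟨rfl, hvS⟩
            · exact Or.inl ⟨h1, fun h => hvS (h ▸ h1)⟩
        rw [hsd, Finset.card_insert_of_notMem hvS, Nat.even_add_one]
    have hsdsd : ∀ S : Finset ℂ, symmDiff (symmDiff S {v}) {v} = S := fun S =>
      symmDiff_symmDiff_cancel_right {v} S
    -- the two filtered families
    set A := Ev.filter (fun S => P S ∈ line v p) with hA
    set B := Od.filter (fun S => P S ∈ line v p) with hB
    have hcoeF : (↑(Ev.image P) : Set ℂ) ∩ line v p = ↑(A.image P) := by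
      ext x
      simp only [Set.mem_inter_iff, Finset.coe_image, Set.mem_image, Finset.mem_coe,
        hA, Finset.mem_filter]
      constructor
      · rintro ⟨⟨S, hS, rfl⟩, hl⟩
        exact ⟨S, ⟨hS, hl⟩, rfl⟩
      · rintro ⟨S, ⟨hS, hl⟩, rfl⟩
        exact ⟨⟨S, hS, rfl⟩, hl⟩
    have hcoeF' : (↑(Od.image P) : Set ℂ) ∩ line v p = ↑(B.image P) := by
      ext x
      simp only [Set.mem_inter_iff, Finset.coe_image, Set.mem_image, Finset.mem_coe,
        hB, Finset.mem_filter]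
      constructor
      · rintro ⟨⟨S, hS, rfl⟩, hl⟩
        exact ⟨S, ⟨hS, hl⟩, rfl⟩
      · rintro ⟨S, ⟨hS, hl⟩, rfl⟩
        exact ⟨⟨S, hS, rfl⟩, hl⟩
    have hcardAB : A.card = B.card := by
      refine Finset.card_bij' (fun S _ => symmDiff S {v}) (fun S _ => symmDiff S {v})
        ?_ ?_ ?_ ?_
      · intro S hS
        rw [hA, Finset.mem_filter, hEv, Finset.mem_filter, Finset.mem_powerset] at hS
        obtain ⟨⟨hSU, hSev⟩, hSl⟩ := hS
        rw [hB, Finset.mem_filter, hOd, Finset.mem_filter, Finset.mem_powerset]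
        refine ⟨⟨hsdU S hSU, ?_⟩, ?_⟩
        · intro hcon
          rw [hsdcard S] at hcon
          exact hcon hSev
        · exact (hPsd S hSU).1 hSl
      · intro S hS
        rw [hB, Finset.mem_filter, hOd, Finset.mem_filter, Finset.mem_powerset] at hS
        obtain ⟨⟨hSU, hSod⟩, hSl⟩ := hS
        rw [hA, Finset.mem_filter, hEv, Finset.mem_filter, Finset.mem_powerset]
        refine ⟨⟨hsdU S hSU, ?_⟩, ?_⟩
        · rw [hsdcard S]
          exact hSod
        · exact (hPsd S hSU).1 hSl
      · intro S _
        exact hsdsd S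
      · intro S _
        exact hsdsd S
    have hinjA : Set.InjOn P ↑A := by
      intro S hS T hT h
      exact hPinj S T (hEvU S (Finset.mem_filter.1 hS).1) (hEvU T (Finset.mem_filter.1 hT).1) h
    have hinjB : Set.InjOn P ↑B := by
      intro S hS T hT h
      exact hPinj S T (hOdU S (Finset.mem_filter.1 hS).1) (hOdU T (Finset.mem_filter.1 hT).1) h
    show ((↑(Ev.image P) : Set ℂ) ∩ line v p).ncard = ((↑(Od.image P) : Set ℂ) ∩ line v p).ncard
    rw [hcoeF, hcoeF', Set.ncard_coe_finset, Set.ncard_coe_finset,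
      Finset.card_image_of_injOn hinjA, Finset.card_image_of_injOn hinjB, hcardAB]

end
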